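/- Let f: {0,1}^n → {0,1} be non-constant, with f(z₁) = 1 and f(z₂) = 0, and let C_f be the diagonal unitary with C_f|x,y⟩ = e^{iπ(1-2y)f(x)/4}|x,y⟩. Then the restriction of C_f to the 4-dimensional subspace spanned by |z₁,0⟩, |z₂,0⟩, |z₁,1⟩, |z₂,1⟩ is entangling: there exists a product state in this subspace (with respect to the split between the first n qubits and last qubit) whose image under C_f is not a product state. -/
import Mathlib


open Complex Matrix

noncomputable section

/-- The diagonal unitary `C_f` on `n+1` qubits. -/
def Cf (n : ℕ) (f : (Fin n → Bool) → Bool) :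
    Matrix ((Fin n → Bool) × Bool) ((Fin n → Bool) × Bool) ℂ :=
  Matrix.diagonal fun p =>
    Complex.exp (Complex.I * (Real.pi / 4) * (1 - 2 * (if p.2 then 1 else 0)) *
      (if f p.1 then 1 else 0))

/-- A vector in `(ℂ²)^⊗n ⊗ ℂ²` (indexed by `(Fin n → Bool) × Bool`) is a product state
for the bipartition between the first `n` qubits and the last qubit. -/
def IsProductState (n : ℕ) (v : ((Fin n → Bool) × Bool) → ℂ) : Prop :=
  ∃ (a : (Fin n → Bool) → ℂ) (b : Bool → ℂ), ∀ p, v p = a p.1 * b p.2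

/-- If `f` is non-constant (with `f z₁ = 1`, `f z₂ = 0`), then `C_f` restricted to the
span of `|z₁,0⟩, |z₂,0⟩, |z₁,1⟩, |z₂,1⟩` is entangling: some product state in this
subspace is mapped by `C_f` to a non-product state. -/
theorem Cf_entangling_on_subspace (n : ℕ) (f : (Fin n → Bool) → Bool)
    (z₁ z₂ : Fin n → Bool) (h₁ : f z₁ = true) (h₂ : f z₂ = false) :
    ∃ v : ((Fin n → Bool) × Bool) → ℂ,
      v ∈ Submodule.span ℂ
        ({Pi.single (z₁, false) 1, Pi.single (z₂, false) 1,
          Pi.single (z₁, true) 1, Pi.single (z₂, true) 1} :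
            Set (((Fin n → Bool) × Bool) → ℂ)) ∧
      IsProductState n v ∧ ¬ IsProductState n (Cf n f *ᵥ v) := by
  have hne : z₁ ≠ z₂ := by
    intro h; rw [h, h₂] at h₁; exact Bool.false_ne_true h₁
  set v : ((Fin n → Bool) × Bool) → ℂ :=
    Pi.single (z₁, false) 1 + Pi.single (z₂, false) 1 +
      Pi.single (z₁, true) 1 + Pi.single (z₂, true) 1 with hv
  have hv1 : ∀ y, v (z₁, y) = 1 := by
    intro y
    simp only [hv, Pi.add_apply]
    cases y <;>
      simp [Pi.single_apply, Prod.ext_iff, hne, hne.symm]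
  have hv2 : ∀ y, v (z₂, y) = 1 := by
    intro y
    simp only [hv, Pi.add_apply]
    cases y <;>
      simp [Pi.single_apply, Prod.ext_iff, hne, hne.symm]
  refine ⟨v, ?_, ?_, ?_⟩
  · have m1 : (Pi.single (z₁, false) 1 : ((Fin n → Bool) × Bool) → ℂ) ∈
        Submodule.span ℂ ({Pi.single (z₁, false) 1, Pi.single (z₂, false) 1,
          Pi.single (z₁, true) 1, Pi.single (z₂, true) 1} :
            Set (((Fin n → Bool) × Bool) → ℂ)) :=
      Submodule.subset_span (by simp)
    have m2 : (Pi.single (z₂, false) 1 : ((Fin n → Bool) × Bool) → ℂ) ∈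
        Submodule.span ℂ ({Pi.single (z₁, false) 1, Pi.single (z₂, false) 1,
          Pi.single (z₁, true) 1, Pi.single (z₂, true) 1} :
            Set (((Fin n → Bool) × Bool) → ℂ)) :=
      Submodule.subset_span (by simp)
    have m3 : (Pi.single (z₁, true) 1 : ((Fin n → Bool) × Bool) → ℂ) ∈
        Submodule.span ℂ ({Pi.single (z₁, false) 1, Pi.single (z₂, false) 1,
          Pi.single (z₁, true) 1, Pi.single (z₂, true) 1} :
            Set (((Fin n → Bool) × Bool) → ℂ)) :=
      Submodule.subset_span (by simp)
    have m4 : (Pi.single (z₂, true) 1 : ((Fin n → Bool) × Bool) → ℂ) ∈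
        Submodule.span ℂ ({Pi.single (z₁, false) 1, Pi.single (z₂, false) 1,
          Pi.single (z₁, true) 1, Pi.single (z₂, true) 1} :
            Set (((Fin n → Bool) × Bool) → ℂ)) :=
      Submodule.subset_span (by simp)
    exact Submodule.add_mem _ (Submodule.add_mem _ (Submodule.add_mem _ m1 m2) m3) m4
  · refine ⟨fun x => if x = z₁ ∨ x = z₂ then 1 else 0, fun _ => 1, fun p => ?_⟩
    rcases p with ⟨x, y⟩
    by_cases hx1 : x = z₁
    · subst hx1; simp [hv1]
    by_cases hx2 : x = z₂
    · subst hx2; simp [hv2]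
    · simp only [hx1, hx2, or_self, if_false, mul_one]
      simp [hv, Pi.single_apply, Prod.ext_iff, hx1, hx2]
  · rintro ⟨a, b, hab⟩
    set w := Cf n f *ᵥ v with hw
    have hwv : ∀ p, w p = Complex.exp (Complex.I * (Real.pi / 4) *
        (1 - 2 * (if p.2 then 1 else 0)) * (if f p.1 then 1 else 0)) * v p := by
      intro p
      simp [hw, Cf, Matrix.mulVec_diagonal]
    have e10 : w (z₁, false) = Complex.exp (Complex.I * (Real.pi / 4)) := by
      rw [hwv]; simp [h₁, hv1]
    have e11 : w (z₁, true) = Complex.exp (-(Complex.I * (Real.pi / 4))) := by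
      rw [hwv]; simp [h₁, hv1]; ring_nf
    have e20 : w (z₂, false) = 1 := by
      rw [hwv]; simp [h₂, hv2]
    have e21 : w (z₂, true) = 1 := by
      rw [hwv]; simp [h₂, hv2]
    have key : w (z₁, false) * w (z₂, true) = w (z₁, true) * w (z₂, false) := by
      rw [hab (z₁, false), hab (z₂, true), hab (z₁, true), hab (z₂, false)]; ring
    rw [e10, e11, e20, e21, mul_one, mul_one] at key
    have : Complex.exp (Complex.I * (Real.pi / 4)) *
        Complex.exp (Complex.I * (Real.pi / 4)) =
        Complex.exp (-(Complex.I * (Real.pi / 4))) *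
        Complex.exp (Complex.I * (Real.pi / 4)) := by rw [key]
    rw [← Complex.exp_add, ← Complex.exp_add, neg_add_cancel, Complex.exp_zero] at this
    have h2 : Complex.exp (Complex.I * (Real.pi / 2)) = 1 := by
      rw [← this]; congr 1; ring
    rw [mul_comm, Complex.exp_mul_I] at h2
    simp [Complex.ext_iff, Real.cos_pi_div_two, Real.sin_pi_div_two] at h2
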